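/- Escort formula for the derivative of the binary log-partition function: let 1 < t < 2 and let G : ℝ → ℝ be differentiable with exp_t(a/2 - G(a)) + exp_t(-a/2 - G(a)) = 1 for all a ∈ ℝ. Writing p₊(a) = exp_t(a/2 - G(a)) and p₋(a) = exp_t(-a/2 - G(a)), one has for every a: G'(a) = (1/2) · (p₊(a)^t - p₋(a)^t) / (p₊(a)^t + p₋(a)^t). In particular -1/2 < G'(a) < 1/2 whenever both p₊(a) and p₋(a) are positive. -/

import Mathlib

/-- The tempered exponential `exp_t`: for `t ≠ 1` it is
`(max 0 (1 + (1-t)u))^(1/(1-t))`; for `t = 1` it is the standard exponential. -/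
noncomputable def texp (t u : ℝ) : ℝ :=
  if t = 1 then Real.exp u else (max 0 (1 + (1 - t) * u)) ^ (1 / (1 - t))

private lemma dichotomy_aux (f : ℝ → ℝ) (hf : Continuous f)
    (h : ∀ a, f a ≤ 0 ∨ 1 ≤ f a) : (∀ a, f a ≤ 0) ∨ (∀ a, 1 ≤ f a) := by
  by_contra hc
  push_neg at hc
  obtain ⟨⟨a₁, ha₁⟩, ⟨a₂, ha₂⟩⟩ := hc
  have h1 : 1 ≤ f a₁ := (h a₁).resolve_left (by linarith)
  have h2 : f a₂ ≤ 0 := (h a₂).resolve_right (by linarith)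
  have : (1/2 : ℝ) ∈ Set.uIcc (f a₂) (f a₁) := by
    rw [Set.mem_uIcc]; left; constructor <;> linarith
  obtain ⟨c, _, hc⟩ := intermediate_value_uIcc (hf.continuousOn (s := Set.uIcc a₂ a₁)) this
  rcases h c with hh | hh <;> rw [hc] at hh <;> linarith

theorem logPartition_deriv_escort (t : ℝ) (ht1 : 1 < t) (ht2 : t < 2)
    (G : ℝ → ℝ) (hGdiff : Differentiable ℝ G)
    (hG : ∀ a : ℝ, texp t (a / 2 - G a) + texp t (-a / 2 - G a) = 1) :
    ∀ a : ℝ,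
      deriv G a = (1 / 2) *
        ((texp t (a / 2 - G a)) ^ t - (texp t (-a / 2 - G a)) ^ t) /
        ((texp t (a / 2 - G a)) ^ t + (texp t (-a / 2 - G a)) ^ t) ∧
      (0 < texp t (a / 2 - G a) → 0 < texp t (-a / 2 - G a) →
        -(1 / 2) < deriv G a ∧ deriv G a < 1 / 2) := by
  have htne : t ≠ 1 := ne_of_gt ht1
  set s : ℝ := 1 - t with hs
  have hsneg : s < 0 := by simp [hs]; linarith
  have hsne : s ≠ 0 := ne_of_lt hsneg
  set e : ℝ := 1 / s with he
  have hene : e ≠ 0 := one_div_ne_zero hsne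
  have heneg : e < 0 := by exact one_div_neg.mpr hsneg
  have htexp : ∀ u, texp t u = (max 0 (1 + s * u)) ^ e := by
    intro u; simp [texp, htne, hs, he]
  -- bases
  set bp : ℝ → ℝ := fun a => 1 + s * (a / 2 - G a) with hbp
  set bm : ℝ → ℝ := fun a => 1 + s * (-a / 2 - G a) with hbm
  have hcontp : Continuous bp := by
    rw [hbp]; exact continuous_const.add (continuous_const.mul ((continuous_id.div_const 2).sub hGdiff.continuous))
  have hcontm : Continuous bm := by
    rw [hbm]; exact continuous_const.add (continuous_const.mul ((continuous_neg.div_const 2).sub hGdiff.continuous))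
  have hnonneg : ∀ u, 0 ≤ texp t u := by
    intro u; rw [htexp]; exact Real.rpow_nonneg (le_max_left _ _) _
  have hle1p : ∀ a, texp t (a / 2 - G a) ≤ 1 := fun a => by
    have := hG a; have := hnonneg (-a/2 - G a); linarith
  have hle1m : ∀ a, texp t (-a / 2 - G a) ≤ 1 := fun a => by
    have := hG a; have := hnonneg (a/2 - G a); linarith
  -- if 0 < base < 1 then texp > 1, contradiction; so base ≤ 0 or 1 ≤ base
  have hgap : ∀ (b : ℝ), (max 0 b) ^ e ≤ 1 → b ≤ 0 ∨ 1 ≤ b := by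
    intro b hle
    by_contra hcon
    push_neg at hcon
    obtain ⟨hb0, hb1⟩ := hcon
    have hmax : max 0 b = b := max_eq_right hb0.le
    have : 1 < b ^ e :=
      (Real.one_lt_rpow_iff_of_pos hb0).mpr (Or.inr ⟨hb1, heneg⟩)
    rw [hmax] at hle; linarith
  have hgapp : ∀ a, bp a ≤ 0 ∨ 1 ≤ bp a := fun a =>
    hgap _ (by rw [← htexp]; exact hle1p a)
  have hgapm : ∀ a, bm a ≤ 0 ∨ 1 ≤ bm a := fun a =>
    hgap _ (by rw [← htexp]; exact hle1m a)
  have hdichp := dichotomy_aux bp hcontp hgapp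
  have hdichm := dichotomy_aux bm hcontm hgapm
  -- texp value when base ≥ 1 and when base ≤ 0
  have hval : ∀ (b : ℝ), 1 ≤ b → (max 0 b) ^ e = b ^ e := by
    intro b hb; rw [max_eq_right (by linarith)]
  have hzero : ∀ (b : ℝ), b ≤ 0 → (max 0 b) ^ e = 0 := by
    intro b hb; rw [max_eq_left hb, Real.zero_rpow hene]
  -- texp = 1 forces base = 1
  have hone : ∀ (b : ℝ), (max 0 b) ^ e = 1 → b = 1 := by
    intro b hb
    rcases le_or_gt b 0 with h | h
    · rw [hzero b h] at hb; norm_num at hb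
    · rw [max_eq_right h.le] at hb
      have : (b ^ e) ^ e⁻¹ = (1 : ℝ) ^ e⁻¹ := by rw [hb]
      rwa [Real.rpow_rpow_inv h.le hene, Real.one_rpow] at this
  intro a
  rcases hdichp with hP0 | hP1
  · -- p₊ ≡ 0, p₋ ≡ 1, G a = -a/2
    have hp0 : ∀ x, texp t (x / 2 - G x) = 0 := fun x => by
      rw [htexp]; exact hzero _ (hP0 x)
    have hm1 : ∀ x, texp t (-x / 2 - G x) = 1 := fun x => by
      have := hG x; rw [hp0 x] at this; linarith
    have hGeq : G = fun x => -x / 2 := by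
      funext x
      have := hone _ (by rw [← htexp]; exact hm1 x)
      have : s * (-x / 2 - G x) = 0 := by
        linarith
      have : -x / 2 - G x = 0 := by
        rcases mul_eq_zero.mp this with h | h
        · exact absurd h hsne
        · exact h
      linarith
    have hderiv : deriv G a = -(1/2) := by
      rw [hGeq]
      have : (fun x : ℝ => -x / 2) = fun x : ℝ => (-(1/2)) * x := by funext x; ring
      rw [this, deriv_const_mul_field]; simp
    refine ⟨?_, ?_⟩
    · rw [hderiv, hp0 a, hm1 a, Real.zero_rpow (by linarith : t ≠ 0), Real.one_rpow]
      norm_num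
    · intro h0 _; rw [hp0 a] at h0; linarith
  rcases hdichm with hM0 | hM1
  · -- p₋ ≡ 0, p₊ ≡ 1, G a = a/2
    have hm0 : ∀ x, texp t (-x / 2 - G x) = 0 := fun x => by
      rw [htexp]; exact hzero _ (hM0 x)
    have hp1 : ∀ x, texp t (x / 2 - G x) = 1 := fun x => by
      have := hG x; rw [hm0 x] at this; linarith
    have hGeq : G = fun x => x / 2 := by
      funext x
      have := hone _ (by rw [← htexp]; exact hp1 x)
      have : s * (x / 2 - G x) = 0 := by
        linarith
      have : x / 2 - G x = 0 := by
        rcases mul_eq_zero.mp this with h | h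
        · exact absurd h hsne
        · exact h
      linarith
    have hderiv : deriv G a = 1/2 := by
      rw [hGeq]
      have : (fun x : ℝ => x / 2) = fun x : ℝ => ((1:ℝ)/2) * x := by funext x; ring
      rw [this, deriv_const_mul_field]; simp
    refine ⟨?_, ?_⟩
    · rw [hderiv, hm0 a, hp1 a, Real.zero_rpow (by linarith : t ≠ 0), Real.one_rpow]
      norm_num
    · intro _ h0; rw [hm0 a] at h0; linarith
  -- main case: both bases ≥ 1
  have hbp1 : (1 : ℝ) ≤ bp a := hP1 a
  have hbm1 : (1 : ℝ) ≤ bm a := hM1 a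
  have hbppos : 0 < bp a := by linarith
  have hbmpos : 0 < bm a := by linarith
  set g' := deriv G a with hg'
  have hg : HasDerivAt G g' a := (hGdiff a).hasDerivAt
  have hdp : HasDerivAt bp (s * (1/2 - g')) a := by
    have h1 : HasDerivAt (fun x : ℝ => x / 2 - G x) (1/2 - g') a := by
      have : HasDerivAt (fun x : ℝ => x / 2) (1/2) a := by
        simpa using (hasDerivAt_id a).div_const 2
      exact this.sub hg
    simpa [hbp] using (h1.const_mul s).const_add 1
  have hdm : HasDerivAt bm (s * (-(1/2) - g')) a := by
    have h1 : HasDerivAt (fun x : ℝ => -x / 2 - G x) (-(1/2) - g') a := by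
      have : HasDerivAt (fun x : ℝ => -x / 2) (-(1/2)) a := by
        have := ((hasDerivAt_id a).neg).div_const 2
        simpa [neg_div] using this
      exact this.sub hg
    simpa [hbm] using (h1.const_mul s).const_add 1
  have hdps : HasDerivAt (fun x => bp x ^ e) ((s * (1/2 - g')) * e * bp a ^ (e - 1)) a :=
    hdp.rpow_const (Or.inl (ne_of_gt hbppos))
  have hdms : HasDerivAt (fun x => bm x ^ e) ((s * (-(1/2) - g')) * e * bm a ^ (e - 1)) a :=
    hdm.rpow_const (Or.inl (ne_of_gt hbmpos))
  have hsum : HasDerivAt (fun x => bp x ^ e + bm x ^ e)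
      ((s * (1/2 - g')) * e * bp a ^ (e - 1) + (s * (-(1/2) - g')) * e * bm a ^ (e - 1)) a :=
    hdps.add hdms
  have hfun : (fun x => bp x ^ e + bm x ^ e) = fun _ => (1 : ℝ) := by
    funext x
    have h1 := hG x
    rw [htexp, htexp, hval _ (hP1 x), hval _ (hM1 x)] at h1
    exact h1
  have hsum0 : HasDerivAt (fun x => bp x ^ e + bm x ^ e) 0 a := by
    rw [hfun]; exact hasDerivAt_const a 1
  have heq0 : (s * (1/2 - g')) * e * bp a ^ (e - 1) +
      (s * (-(1/2) - g')) * e * bm a ^ (e - 1) = 0 := hsum.unique hsum0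
  have hse : s * e = 1 := by rw [he, mul_one_div_cancel hsne]
  set A := bp a ^ (e - 1) with hA
  set B := bm a ^ (e - 1) with hB
  have hApos : 0 < A := Real.rpow_pos_of_pos hbppos _
  have hBpos : 0 < B := Real.rpow_pos_of_pos hbmpos _
  have hkey : A * (1/2 - g') + B * (-(1/2) - g') = 0 := by
    have : s * e * ((1/2 - g') * A) + s * e * ((-(1/2) - g') * B) = 0 := by
      rw [← heq0]; ring
    rw [hse] at this; linarith [this]
  -- identify p^t with base^(e-1)
  have het : e * t = e - 1 := by
    linear_combination (-1) * hse + e * hs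
  have hpt : texp t (a / 2 - G a) ^ t = A := by
    rw [htexp, hval _ hbp1, ← Real.rpow_mul hbppos.le, het]
  have hmt : texp t (-a / 2 - G a) ^ t = B := by
    rw [htexp, hval _ hbm1, ← Real.rpow_mul hbmpos.le, het]
  have hABpos : 0 < A + B := by linarith
  have hsolve : g' = (1 / 2) * (A - B) / (A + B) := by
    rw [eq_div_iff (ne_of_gt hABpos)]
    nlinarith [hkey]
  refine ⟨?_, ?_⟩
  · rw [hpt, hmt]; exact hsolve
  · intro _ _
    rw [hsolve]
    constructor
    · rw [neg_lt, ← neg_div, div_lt_iff₀ hABpos]; linarith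
    · rw [div_lt_iff₀ hABpos]; linarith
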